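/- In a finite connected Brauer graph G, an edge x is non-exceptional if and only if x belongs to a cycle of G, or lies on a simple path between two vertices each lying on a cycle, or on a simple path between a vertex on a cycle and a vertex of multiplicity greater than 1, or on a simple path between two vertices of multiplicity greater than 1. -/

import Mathlib

/-!
A Brauer graph is encoded (forgetting the cyclic orderings, which play no role in
these statements) as a finite connected multigraph: a vertex type `V`, an edge type
`E`, an endpoint map `ends : E → Sym2 V`, together with a multiplicity `mult : V → ℕ`.
-/

structure Multigraph (V E : Type) where
  ends : E → Sym2 V

namespace Multigraph

variable {V E : Type}

/-- A walk of length `n` in a multigraph: vertices `vs 0, …, vs n` and edges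
`es 0, …, es (n-1)` with `es i` joining `vs i` and `vs (i+1)`. -/
structure Walk (G : Multigraph V E) (n : ℕ) where
  vs : Fin (n + 1) → V
  es : Fin n → E
  ok : ∀ i : Fin n, G.ends (es i) = s(vs i.castSucc, vs i.succ)

/-- The walk stays inside the subgraph with vertex set `VS` and edge set `ES`. -/
def Walk.inSub {G : Multigraph V E} {n : ℕ} (w : G.Walk n) (VS : Set V) (ES : Set E) :
    Prop :=
  (∀ i, w.vs i ∈ VS) ∧ ∀ i, w.es i ∈ ES

/-- A cycle: a closed walk of positive length with pairwise distinct edges and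
pairwise distinct vertices (other than the repeated endpoint). -/
def IsCycleWalk (G : Multigraph V E) {n : ℕ} (w : G.Walk n) : Prop :=
  0 < n ∧ Function.Injective w.es ∧ w.vs (Fin.last n) = w.vs 0 ∧
    ∀ i j : Fin n, w.vs i.castSucc = w.vs j.castSucc → i = j

def VertexOnCycle (G : Multigraph V E) (v : V) : Prop :=
  ∃ n, ∃ w : G.Walk n, G.IsCycleWalk w ∧ ∃ i, w.vs i = v

def EdgeOnCycle (G : Multigraph V E) (e : E) : Prop :=
  ∃ n, ∃ w : G.Walk n, G.IsCycleWalk w ∧ ∃ i, w.es i = e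

/-- The subgraph on `(VS, ES)` is closed (edges of `ES` have endpoints in `VS`)
and any two of its vertices are joined by a walk inside it. -/
def SubConnected (G : Multigraph V E) (VS : Set V) (ES : Set E) : Prop :=
  (∀ e ∈ ES, ∀ v ∈ G.ends e, v ∈ VS) ∧
    ∀ u ∈ VS, ∀ v ∈ VS, ∃ n, ∃ w : G.Walk n,
      w.inSub VS ES ∧ w.vs 0 = u ∧ w.vs (Fin.last n) = v

def Connected (G : Multigraph V E) : Prop := G.SubConnected Set.univ Set.univ

/-- The subgraph on `(VS, ES)` is a tree: connected and containing no cycle. -/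
def IsTreeSub (G : Multigraph V E) (VS : Set V) (ES : Set E) : Prop :=
  G.SubConnected VS ES ∧
    ¬ ∃ n, ∃ w : G.Walk n, G.IsCycleWalk w ∧ w.inSub VS ES

/-- `G` with multiplicities `mult` is a Brauer tree: a tree with at most one vertex
of multiplicity greater than one. -/
def IsBrauerTree (G : Multigraph V E) (mult : V → ℕ) : Prop :=
  G.IsTreeSub Set.univ Set.univ ∧ {v : V | 1 < mult v}.Subsingleton

/-- An exceptional subtree of a Brauer graph `(G, mult)`: a tree subgraph `(VS, ES)`
with a unique connecting vertex `v` such that the complement `(G \ T) ∪ {v}` is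
connected, `T` meets cycles of `G` only possibly at `v`, and every vertex of `T`
other than possibly `v` has multiplicity `1`. -/
structure ExcSubtree (G : Multigraph V E) (mult : V → ℕ) where
  VS : Set V
  ES : Set E
  v : V
  v_mem : v ∈ VS
  tree : G.IsTreeSub VS ES
  compl_conn : G.SubConnected (VSᶜ ∪ {v}) ESᶜ
  v_unique : ∀ u ∈ VS, G.SubConnected (VSᶜ ∪ {u}) ESᶜ → u = v
  cycles : ∀ u ∈ VS, G.VertexOnCycle u → u = v
  mult_one : ∀ u ∈ VS, u ≠ v → mult u = 1

/-- An edge is exceptional if it belongs to some exceptional subtree. -/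
def ExceptionalEdge (G : Multigraph V E) (mult : V → ℕ) (e : E) : Prop :=
  ∃ T : G.ExcSubtree mult, e ∈ T.ES

end Multigraph

namespace Multigraph
namespace Aux

variable {V E : Type} {G : Multigraph V E} {n m : ℕ}


variable {G : Multigraph V E} {n m : ℕ}

lemma vs_congr (w : G.Walk n) (i j : Fin (n+1)) (h : i.val = j.val) : w.vs i = w.vs j := by
  congr 1; exact Fin.ext h

lemma sym2_congr {a b c d : V} (h1 : a = c) (h2 : b = d) : s(a,b) = s(c,d) := by rw [h1, h2]

lemma mem_ends_left (w : G.Walk n) (i : Fin n) : w.vs i.castSucc ∈ G.ends (w.es i) := by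
  rw [w.ok i]; exact Sym2.mem_iff.mpr (Or.inl rfl)

lemma mem_ends_right (w : G.Walk n) (i : Fin n) : w.vs i.succ ∈ G.ends (w.es i) := by
  rw [w.ok i]; exact Sym2.mem_iff.mpr (Or.inr rfl)

lemma ends_subset (w : G.Walk n) (i : Fin n) :
    ∀ p ∈ G.ends (w.es i), p = w.vs i.castSucc ∨ p = w.vs i.succ := by
  intro p hp; rw [w.ok i] at hp; exact Sym2.mem_iff.mp hp

/-- the constant walk of length 0 -/
def nilWalk (u : V) : G.Walk 0 where
  vs := fun _ => u
  es := fun i => i.elim0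
  ok := fun i => i.elim0

/-- a single-edge walk -/
def edgeWalk (e : E) (u v : V) (h : G.ends e = s(u, v)) : G.Walk 1 where
  vs := fun i => if i.val = 0 then u else v
  es := fun _ => e
  ok := fun i => by
    have : i = 0 := Subsingleton.elim _ _
    subst this
    simpa using h

lemma edgeWalk_vs (e : E) (u v : V) (h : G.ends e = s(u, v)) (i : Fin 2) :
    (edgeWalk e u v h).vs i = if i.val = 0 then u else v := rfl

lemma edgeWalk_es (e : E) (u v : V) (h : G.ends e = s(u, v)) (i : Fin 1) :
    (edgeWalk e u v h).es i = e := rfl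

lemma edgeWalk_vs_zero (e : E) (u v : V) (h : G.ends e = s(u, v)) :
    (edgeWalk e u v h).vs 0 = u := rfl

lemma edgeWalk_vs_last (e : E) (u v : V) (h : G.ends e = s(u, v)) :
    (edgeWalk e u v h).vs (Fin.last 1) = v := rfl

/-- append two walks -/
def appendW (w1 : G.Walk n) (w2 : G.Walk m) (h : w1.vs (Fin.last n) = w2.vs 0) :
    G.Walk (n + m) where
  vs i := if h' : i.val ≤ n then w1.vs ⟨i.val, by omega⟩ else w2.vs ⟨i.val - n, by omega⟩
  es i := if h' : i.val < n then w1.es ⟨i.val, h'⟩ else w2.es ⟨i.val - n, by omega⟩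
  ok i := by
    rcases lt_or_ge i.val n with h1 | h1
    · have hc : (i.castSucc).val ≤ n := by simp; omega
      have hs : (i.succ).val ≤ n := by simp [Fin.val_succ]; omega
      simp only [dif_pos h1, dif_pos hc, dif_pos hs]
      rw [w1.ok ⟨i.val, h1⟩]
      exact sym2_congr (vs_congr _ _ _ (by simp)) (vs_congr _ _ _ (by simp [Fin.val_succ]))
    · have h1' : ¬ i.val < n := by omega
      have hs : ¬ (i.succ).val ≤ n := by simp [Fin.val_succ]; omega
      simp only [dif_neg h1', dif_neg hs]
      rcases eq_or_lt_of_le h1 with he | hl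
      · have hc : (i.castSucc).val ≤ n := by simp; omega
        simp only [dif_pos hc]
        have e1 : w1.vs ⟨(i.castSucc).val, by simp; omega⟩ = w2.vs ⟨i.val - n, by omega⟩ := by
          rw [vs_congr w1 _ (Fin.last n) (by simp; omega), h]
          apply vs_congr; simp; omega
        rw [e1, w2.ok ⟨i.val - n, by omega⟩]
        exact sym2_congr (vs_congr _ _ _ (by simp; try omega))
          (vs_congr _ _ _ (by simp [Fin.val_succ]; omega))
      · have hc : ¬ (i.castSucc).val ≤ n := by simp; omega
        simp only [dif_neg hc]
        rw [w2.ok ⟨i.val - n, by omega⟩]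
        exact sym2_congr (vs_congr _ _ _ (by simp; try omega))
          (vs_congr _ _ _ (by simp [Fin.val_succ]; omega))

lemma appendW_vs (w1 : G.Walk n) (w2 : G.Walk m) (h) (i : Fin (n + m + 1)) :
    (appendW w1 w2 h).vs i =
      if h' : i.val ≤ n then w1.vs ⟨i.val, by omega⟩ else w2.vs ⟨i.val - n, by omega⟩ := rfl

lemma appendW_es (w1 : G.Walk n) (w2 : G.Walk m) (h) (i : Fin (n + m)) :
    (appendW w1 w2 h).es i =
      if h' : i.val < n then w1.es ⟨i.val, h'⟩ else w2.es ⟨i.val - n, by omega⟩ := rfl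

lemma appendW_vs_zero (w1 : G.Walk n) (w2 : G.Walk m) (h) :
    (appendW w1 w2 h).vs 0 = w1.vs 0 := by
  rw [appendW_vs, dif_pos (by simp)]
  apply vs_congr; simp

lemma appendW_vs_last (w1 : G.Walk n) (w2 : G.Walk m) (h) :
    (appendW w1 w2 h).vs (Fin.last (n + m)) = w2.vs (Fin.last m) := by
  rw [appendW_vs]
  rcases Nat.eq_zero_or_pos m with hm | hm
  · subst hm
    rw [dif_pos (by simp)]
    rw [show w2.vs (Fin.last 0) = w2.vs 0 from rfl, ← h]
    apply vs_congr; simp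
  · rw [dif_neg (by simp; omega)]
    apply vs_congr; simp

lemma appendW_vs_mem (w1 : G.Walk n) (w2 : G.Walk m) (h) (i : Fin (n + m + 1)) :
    (∃ j, (appendW w1 w2 h).vs i = w1.vs j) ∨ (∃ j, (appendW w1 w2 h).vs i = w2.vs j) := by
  rw [appendW_vs]
  split
  · exact Or.inl ⟨_, rfl⟩
  · exact Or.inr ⟨_, rfl⟩

lemma appendW_es_mem (w1 : G.Walk n) (w2 : G.Walk m) (h) (i : Fin (n + m)) :
    (∃ j, (appendW w1 w2 h).es i = w1.es j) ∨ (∃ j, (appendW w1 w2 h).es i = w2.es j) := by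
  rw [appendW_es]
  split
  · exact Or.inl ⟨_, rfl⟩
  · exact Or.inr ⟨_, rfl⟩

/-- reverse of a walk -/
def revW (w : G.Walk n) : G.Walk n where
  vs i := w.vs i.rev
  es i := w.es i.rev
  ok i := by
    show G.ends (w.es i.rev) = s(w.vs i.castSucc.rev, w.vs i.succ.rev)
    rw [w.ok i.rev]
    simp only [Fin.rev_castSucc, Fin.rev_succ]
    exact Sym2.eq_swap

@[simp] lemma revW_vs (w : G.Walk n) (i : Fin (n+1)) : (revW w).vs i = w.vs i.rev := rfl
@[simp] lemma revW_es (w : G.Walk n) (i : Fin n) : (revW w).es i = w.es i.rev := rfl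

lemma revW_vs_zero (w : G.Walk n) : (revW w).vs 0 = w.vs (Fin.last n) := by
  rw [revW_vs]; apply vs_congr; simp [Fin.rev]

lemma revW_vs_last (w : G.Walk n) : (revW w).vs (Fin.last n) = w.vs 0 := by
  rw [revW_vs]; apply vs_congr; simp [Fin.rev]

/-- truncation of a walk -/
def takeW (w : G.Walk n) (k : ℕ) (hk : k ≤ n) : G.Walk k where
  vs i := w.vs ⟨i.val, by omega⟩
  es i := w.es ⟨i.val, by omega⟩
  ok i := by
    show G.ends (w.es ⟨i.val, by omega⟩) = _
    rw [w.ok ⟨i.val, by omega⟩]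
    exact sym2_congr (vs_congr _ _ _ (by simp)) (vs_congr _ _ _ (by simp [Fin.val_succ]))

lemma takeW_vs (w : G.Walk n) (k : ℕ) (hk : k ≤ n) (i : Fin (k+1)) :
    (takeW w k hk).vs i = w.vs ⟨i.val, by omega⟩ := rfl

lemma takeW_es (w : G.Walk n) (k : ℕ) (hk : k ≤ n) (i : Fin k) :
    (takeW w k hk).es i = w.es ⟨i.val, by omega⟩ := rfl

lemma takeW_vs_zero (w : G.Walk n) (k : ℕ) (hk : k ≤ n) : (takeW w k hk).vs 0 = w.vs 0 := by
  rw [takeW_vs]; apply vs_congr; simp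

lemma takeW_vs_last (w : G.Walk n) (k : ℕ) (hk : k ≤ n) :
    (takeW w k hk).vs (Fin.last k) = w.vs ⟨k, by omega⟩ := rfl


section Reach

variable (VS : Set V) (ES : Set E)

def Reach (u v : V) : Prop :=
  ∃ n, ∃ w : G.Walk n, w.inSub VS ES ∧ w.vs 0 = u ∧ w.vs (Fin.last n) = v

variable {VS ES}

lemma Reach.refl {u : V} (hu : u ∈ VS) : Reach (G := G) VS ES u u :=
  ⟨0, nilWalk u, ⟨fun _ => hu, fun i => i.elim0⟩, rfl, rfl⟩

lemma Reach.symm {u v : V} (h : Reach (G := G) VS ES u v) : Reach (G := G) VS ES v u := by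
  obtain ⟨n, w, ⟨hv, he⟩, h0, h1⟩ := h
  exact ⟨n, revW w, ⟨fun i => hv _, fun i => he _⟩,
    (revW_vs_zero w).trans h1, (revW_vs_last w).trans h0⟩

lemma Reach.trans {u v t : V} (h1 : Reach (G := G) VS ES u v)
    (h2 : Reach (G := G) VS ES v t) : Reach (G := G) VS ES u t := by
  obtain ⟨n, w1, ⟨hv1, he1⟩, h10, h11⟩ := h1
  obtain ⟨m, w2, ⟨hv2, he2⟩, h20, h21⟩ := h2
  refine ⟨n + m, appendW w1 w2 (h11.trans h20.symm), ⟨?_, ?_⟩,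
    (appendW_vs_zero _ _ _).trans h10, (appendW_vs_last _ _ _).trans h21⟩
  · intro i
    rcases appendW_vs_mem w1 w2 (h11.trans h20.symm) i with ⟨j, hj⟩ | ⟨j, hj⟩ <;> rw [hj]
    exacts [hv1 j, hv2 j]
  · intro i
    rcases appendW_es_mem w1 w2 (h11.trans h20.symm) i with ⟨j, hj⟩ | ⟨j, hj⟩ <;> rw [hj]
    exacts [he1 j, he2 j]

lemma Reach.edge {e : E} {u v : V} (h : G.ends e = s(u, v)) (he : e ∈ ES)
    (hu : u ∈ VS) (hv : v ∈ VS) : Reach (G := G) VS ES u v := by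
  refine ⟨1, edgeWalk e u v h, ⟨?_, fun _ => he⟩, rfl, rfl⟩
  intro i
  rw [edgeWalk_vs]
  split <;> assumption

/-- every vertex of a sub-walk is reachable from the start -/
lemma Reach.of_walk_vs {w : G.Walk n} (hw : w.inSub VS ES) (i : Fin (n + 1)) :
    Reach (G := G) VS ES (w.vs 0) (w.vs i) := by
  refine ⟨i.val, takeW w i.val (by omega), ⟨fun k => hw.1 _, fun k => hw.2 _⟩,
    takeW_vs_zero _ _ _, ?_⟩
  refine (takeW_vs_last _ _ _).trans (vs_congr _ _ _ ?_)
  simp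

end Reach

/-- cutting out a repeated-vertex segment of a walk -/
def cutW (w : G.Walk n) (i j : ℕ) (hij : i ≤ j) (hj : j ≤ n)
    (hv : w.vs ⟨i, by omega⟩ = w.vs ⟨j, by omega⟩) : G.Walk (n - (j - i)) where
  vs k := if h' : k.val ≤ i then w.vs ⟨k.val, by omega⟩ else w.vs ⟨k.val + (j - i), by omega⟩
  es k := if h' : k.val < i then w.es ⟨k.val, by omega⟩ else w.es ⟨k.val + (j - i), by omega⟩
  ok k := by
    rcases lt_or_ge k.val i with h1 | h1
    · have hc : (k.castSucc).val ≤ i := by simp; omega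
      have hs : (k.succ).val ≤ i := by simp [Fin.val_succ]; omega
      simp only [dif_pos h1, dif_pos hc, dif_pos hs]
      rw [w.ok ⟨k.val, by omega⟩]
      exact sym2_congr (vs_congr _ _ _ (by simp)) (vs_congr _ _ _ (by simp [Fin.val_succ]))
    · have h1' : ¬ k.val < i := by omega
      have hs : ¬ (k.succ).val ≤ i := by simp [Fin.val_succ]; omega
      simp only [dif_neg h1', dif_neg hs]
      rw [w.ok ⟨k.val + (j - i), by omega⟩]
      rcases eq_or_lt_of_le h1 with he | hl
      · have hc : (k.castSucc).val ≤ i := by simp; omega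
        simp only [dif_pos hc]
        have e1 : w.vs ⟨(k.castSucc).val, by omega⟩ = w.vs ⟨k.val + (j - i), by omega⟩ := by
          rw [vs_congr w _ ⟨i, by omega⟩ (by simp; omega), hv]
          apply vs_congr; simp; omega
        rw [e1]
        exact sym2_congr (vs_congr _ _ _ (by simp; try omega))
          (vs_congr _ _ _ (by simp [Fin.val_succ]; omega))
      · have hc : ¬ (k.castSucc).val ≤ i := by simp; omega
        simp only [dif_neg hc]
        exact sym2_congr (vs_congr _ _ _ (by simp; try omega))
          (vs_congr _ _ _ (by simp [Fin.val_succ]; omega))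

lemma cutW_vs (w : G.Walk n) (i j : ℕ) (hij : i ≤ j) (hj : j ≤ n) (hv) (k) :
    (cutW w i j hij hj hv).vs k =
      if h' : k.val ≤ i then w.vs ⟨k.val, by omega⟩
      else w.vs ⟨k.val + (j - i), by omega⟩ := rfl

lemma cutW_es (w : G.Walk n) (i j : ℕ) (hij : i ≤ j) (hj : j ≤ n) (hv) (k) :
    (cutW w i j hij hj hv).es k =
      if h' : k.val < i then w.es ⟨k.val, by omega⟩
      else w.es ⟨k.val + (j - i), by omega⟩ := rfl

lemma cutW_vs_zero (w : G.Walk n) (i j : ℕ) (hij : i ≤ j) (hj : j ≤ n) (hv) :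
    (cutW w i j hij hj hv).vs 0 = w.vs 0 := by
  rw [cutW_vs, dif_pos (by simp)]
  apply vs_congr; simp

lemma cutW_vs_last (w : G.Walk n) (i j : ℕ) (hij : i ≤ j) (hj : j ≤ n) (hv) :
    (cutW w i j hij hj hv).vs (Fin.last (n - (j - i))) = w.vs (Fin.last n) := by
  have hL : (Fin.last (n - (j - i))).val = n - (j - i) := rfl
  rw [cutW_vs]
  split
  · next h' =>
    rw [hL] at h'
    rw [vs_congr w _ ⟨i, by omega⟩ (by rw [hL]; show n - (j - i) = i; omega), hv]
    apply vs_congr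
    show j = (Fin.last n).val
    rw [Fin.val_last]; omega
  · next h' =>
    rw [hL] at h'
    apply vs_congr
    show (Fin.last (n - (j - i))).val + (j - i) = (Fin.last n).val
    rw [hL, Fin.val_last]; omega

lemma cutW_vs_mem (w : G.Walk n) (i j : ℕ) (hij : i ≤ j) (hj : j ≤ n) (hv) (k) :
    ∃ l, (cutW w i j hij hj hv).vs k = w.vs l := by
  rw [cutW_vs]; split
  · exact ⟨_, rfl⟩
  · exact ⟨_, rfl⟩

lemma cutW_es_mem (w : G.Walk n) (i j : ℕ) (hij : i ≤ j) (hj : j ≤ n) (hv) (k) :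
    ∃ l, (cutW w i j hij hj hv).es k = w.es l := by
  rw [cutW_es]; split
  · exact ⟨_, rfl⟩
  · exact ⟨_, rfl⟩

/-- simple path extraction -/
lemma exists_simple : ∀ n (w : G.Walk n), ∃ m, ∃ w' : G.Walk m,
    Function.Injective w'.vs ∧ w'.vs 0 = w.vs 0 ∧ w'.vs (Fin.last m) = w.vs (Fin.last n) ∧
    (∀ j, ∃ i, w'.es j = w.es i) ∧ (∀ j, ∃ i, w'.vs j = w.vs i) := by
  intro n
  induction n using Nat.strong_induction_on with
  | _ n ih =>
    intro w
    by_cases hinj : Function.Injective w.vs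
    · exact ⟨n, w, hinj, rfl, rfl, fun j => ⟨j, rfl⟩, fun j => ⟨j, rfl⟩⟩
    · rw [Function.Injective] at hinj
      push_neg at hinj
      obtain ⟨i, j, hv, hne⟩ := hinj
      -- wlog i.val < j.val
      obtain ⟨i, j, hlt, hv⟩ : ∃ i j : Fin (n+1), i.val < j.val ∧ w.vs i = w.vs j := by
        rcases lt_or_gt_of_ne (fun h : i.val = j.val => hne (Fin.ext h)) with h | h
        · exact ⟨i, j, h, hv⟩
        · exact ⟨j, i, h, hv.symm⟩
      have hlen : n - (j.val - i.val) < n := by omega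
      have hv' : w.vs ⟨i.val, by omega⟩ = w.vs ⟨j.val, by omega⟩ := by
        rw [vs_congr w _ i rfl, vs_congr w _ j rfl]; exact hv
      obtain ⟨m, w', hw1, hw2, hw3, hw4, hw5⟩ :=
        ih _ hlen (cutW w i.val j.val (le_of_lt hlt) (by omega) hv')
      refine ⟨m, w', hw1, hw2.trans (cutW_vs_zero _ _ _ _ _ _),
        hw3.trans (cutW_vs_last _ _ _ _ _ _), fun k => ?_, fun k => ?_⟩
      · obtain ⟨l, hl⟩ := hw4 k
        obtain ⟨l', hl'⟩ := cutW_es_mem w i.val j.val (le_of_lt hlt) (by omega) hv' l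
        exact ⟨l', hl.trans hl'⟩
      · obtain ⟨l, hl⟩ := hw5 k
        obtain ⟨l', hl'⟩ := cutW_vs_mem w i.val j.val (le_of_lt hlt) (by omega) hv' l
        exact ⟨l', hl.trans hl'⟩

/-- a vertex-injective walk has injective edges -/
lemma inj_es_of_inj_vs (w : G.Walk n) (h : Function.Injective w.vs) :
    Function.Injective w.es := by
  intro i j heq
  have h1 := w.ok i
  rw [heq, w.ok j] at h1
  rw [Sym2.eq_iff] at h1
  rcases h1 with ⟨ha, hb⟩ | ⟨ha, hb⟩
  · exact (Fin.castSucc_injective _ (h ha)).symm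
  · have e1 : j.castSucc = i.succ := h ha
    have e2 : j.succ = i.castSucc := h hb
    have q1 : j.val = i.val + 1 := by
      have := congrArg Fin.val e1; simpa using this
    have q2 : j.val + 1 = i.val := by
      have := congrArg Fin.val e2; simpa [Fin.val_succ] using this
    have : False := by omega
    exact this.elim


lemma sym2_exists (z : Sym2 V) : ∃ p q, z = s(p, q) := by
  induction z using Sym2.ind with
  | _ p q => exact ⟨p, q, rfl⟩

/-- From an x-avoiding reach from b to a, build a cycle through x. -/
lemma cycle_of_reach {x : E} {a b : V} (hab : G.ends x = s(a, b))
    (h : Reach (G := G) Set.univ {e | e ≠ x} b a) : G.EdgeOnCycle x := by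
  obtain ⟨n, w, ⟨_, hes⟩, h0, h1⟩ := h
  obtain ⟨m, w', hinj, hw0, hw1, hw4, _⟩ := exists_simple (G := G) n w
  have hxe : ∀ j, w'.es j ≠ x := by
    intro j
    obtain ⟨i, hi⟩ := hw4 j
    rw [hi]; exact hes i
  have hlast : w'.vs (Fin.last m) = (edgeWalk x a b hab).vs 0 := by
    rw [hw1, h1, edgeWalk_vs_zero]
  refine ⟨m + 1, appendW w' (edgeWalk x a b hab) hlast, ⟨by omega, ?_, ?_, ?_⟩,
    ⟨⟨m, by omega⟩, ?_⟩⟩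
  · -- injective edges
    intro k l heq
    rw [appendW_es, appendW_es] at heq
    rcases lt_or_ge k.val m with hk | hk <;> rcases lt_or_ge l.val m with hl | hl
    · rw [dif_pos hk, dif_pos hl] at heq
      have h2 := congrArg Fin.val (inj_es_of_inj_vs w' hinj heq)
      exact Fin.ext (by simpa using h2)
    · rw [dif_pos hk, dif_neg (by omega)] at heq
      exact absurd (heq.trans (edgeWalk_es x a b hab _)) (hxe _)
    · rw [dif_neg (by omega), dif_pos hl] at heq
      exact absurd (heq.symm.trans (edgeWalk_es x a b hab _)) (hxe _)
    · exact Fin.ext (by omega)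
  · -- closed
    rw [appendW_vs_last, appendW_vs_zero, hw0, h0, edgeWalk_vs_last]
  · -- distinct vertices
    intro k l heq
    rw [appendW_vs, appendW_vs] at heq
    rw [dif_pos (by simp; omega), dif_pos (by simp; omega)] at heq
    have := hinj heq
    have := congrArg Fin.val this
    simp at this
    exact Fin.ext this
  · -- contains x
    rw [appendW_es, dif_neg (by simp)]
    exact edgeWalk_es x a b hab _

section Bridge

variable {x : E} {a b : V}

/-- every vertex is x-avoiding-reachable from a or from b -/
lemma reach_total (hconn : G.SubConnected Set.univ Set.univ) (hab : G.ends x = s(a, b))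
    (u : V) : Reach (G := G) Set.univ {e | e ≠ x} a u ∨
      Reach (G := G) Set.univ {e | e ≠ x} b u := by
  classical
  obtain ⟨n, w, _, h0, h1⟩ := hconn.2 u trivial a trivial
  by_cases hall : ∀ i : Fin n, w.es i ≠ x
  · left
    exact Reach.symm (⟨n, w, ⟨fun _ => Set.mem_univ _, hall⟩, h0, h1⟩ :
      Reach (G := G) Set.univ {e | e ≠ x} u a)
  · push_neg at hall
    have hP : ∃ k, ∃ hk : k < n, w.es ⟨k, hk⟩ = x := by
      obtain ⟨i, hi⟩ := hall
      exact ⟨i.val, i.isLt, by rwa [show (⟨i.val, i.isLt⟩ : Fin n) = i from Fin.ext rfl]⟩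
    set k0 := Nat.find hP with hk0
    obtain ⟨hk0n, hk0x⟩ := Nat.find_spec hP
    have hmin : ∀ l, l < k0 → ∀ hl : l < n, w.es ⟨l, hl⟩ ≠ x := by
      intro l hl hln
      have := Nat.find_min hP hl
      push_neg at this
      exact this hln
    have hreach : Reach (G := G) Set.univ {e | e ≠ x} u (w.vs ⟨k0, by omega⟩) := by
      refine ⟨k0, takeW w k0 (by omega), ⟨fun _ => trivial, ?_⟩, (takeW_vs_zero _ _ _).trans h0, ?_⟩
      · intro i
        rw [takeW_es]
        exact hmin i.val i.isLt _
      · rw [takeW_vs_last]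
    have hend : w.vs ⟨k0, by omega⟩ = a ∨ w.vs ⟨k0, by omega⟩ = b := by
      have hok := w.ok ⟨k0, hk0n⟩
      rw [hk0x, hab] at hok
      rw [Sym2.eq_iff] at hok
      rcases hok with ⟨h2, _⟩ | ⟨_, h3⟩
      · left; rw [h2]; apply vs_congr; simp
      · right; rw [h3]; apply vs_congr; simp
    rcases hend with he | he
    · left; rw [← he]; exact hreach.symm
    · right; rw [← he]; exact hreach.symm

lemma reach_not_both (hnc : ¬ G.EdgeOnCycle x) (hab : G.ends x = s(a, b)) (u : V) :
    ¬ (Reach (G := G) Set.univ {e | e ≠ x} a u ∧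
       Reach (G := G) Set.univ {e | e ≠ x} b u) := by
  rintro ⟨h1, h2⟩
  exact hnc (cycle_of_reach hab (h2.trans h1.symm))

end Bridge

/-- a property propagated along the vertices of a walk -/
lemma walk_vs_prop (w : G.Walk n) (S : Set V) (h0 : w.vs 0 ∈ S)
    (hstep : ∀ i : Fin n, w.vs i.castSucc ∈ S → w.vs i.succ ∈ S) : ∀ i, w.vs i ∈ S := by
  have key : ∀ k (hk : k < n + 1), w.vs ⟨k, hk⟩ ∈ S := by
    intro k
    induction k with
    | zero =>
      intro hk
      rw [vs_congr w _ 0 (by simp)]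
      exact h0
    | succ k ihk =>
      intro hk
      have hkn : k < n := by omega
      rw [vs_congr w _ (⟨k, hkn⟩ : Fin n).succ (by simp [Fin.val_succ])]
      apply hstep
      rw [vs_congr w _ ⟨k, by omega⟩ (by simp)]
      exact ihk (by omega)
  intro i
  rw [vs_congr w i ⟨i.val, i.isLt⟩ rfl]
  exact key i.val i.isLt


/-- Crossing lemma: a walk with some edge in an exceptional subtree, starting at a
vertex that is on a cycle or has multiplicity > 1, passes through the connecting
vertex at or before that edge. -/
lemma cross {mult : V → ℕ} (T : G.ExcSubtree mult) {n : ℕ} (w : G.Walk n) (i : Fin n)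
    (hx : w.es i ∈ T.ES)
    (hh : G.VertexOnCycle (w.vs 0) ∨ 1 < mult (w.vs 0)) :
    ∃ k : Fin (n + 1), k.val ≤ i.val ∧ w.vs k = T.v := by
  classical
  have hvsi : w.vs i.castSucc ∈ T.VS := T.tree.1.1 _ hx _ (mem_ends_left w i)
  by_cases h0 : w.vs 0 ∈ T.VS
  · refine ⟨0, by simp, ?_⟩
    rcases hh with hc | hm
    · exact T.cycles _ h0 hc
    · by_contra hne
      have := T.mult_one _ h0 hne
      omega
  · have hP : ∃ k, ∃ hk : k < n + 1, w.vs ⟨k, hk⟩ ∈ T.VS := by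
      refine ⟨i.val, by omega, ?_⟩
      rwa [vs_congr w _ i.castSucc (by simp)]
    set k0 := Nat.find hP with hk0def
    obtain ⟨hk0n, hk0mem⟩ := Nat.find_spec hP
    have hk0i : k0 ≤ i.val :=
      Nat.find_le ⟨by omega, by rwa [vs_congr w _ i.castSucc (by simp)]⟩
    have hk0pos : 0 < k0 := by
      rcases Nat.eq_zero_or_pos k0 with h | h
      · exfalso
        apply h0
        have h2 := hk0mem
        rwa [vs_congr w ⟨Nat.find hP, hk0n⟩ 0 (by show Nat.find hP = 0; omega)] at h2
      · exact h
    have hk1n : k0 - 1 < n := by omega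
    have hnotVS : w.vs ⟨k0 - 1, by omega⟩ ∉ T.VS := by
      intro hmem
      exact Nat.find_min hP (show k0 - 1 < k0 by omega) ⟨by omega, hmem⟩
    have heES : w.es ⟨k0 - 1, hk1n⟩ ∉ T.ES := by
      intro hmem
      apply hnotVS
      have h3 := T.tree.1.1 _ hmem _ (mem_ends_left w ⟨k0 - 1, hk1n⟩)
      rwa [vs_congr w _ ⟨k0 - 1, by omega⟩ (by simp)] at h3
    have hcomp := T.compl_conn.1 _ heES _ (mem_ends_right w ⟨k0 - 1, hk1n⟩)
    have hsucc : w.vs (⟨k0 - 1, hk1n⟩ : Fin n).succ = w.vs ⟨k0, by omega⟩ := by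
      apply vs_congr; simp [Fin.val_succ]; omega
    rw [hsucc] at hcomp
    rcases hcomp with hcl | hcr
    · exact absurd hk0mem hcl
    · exact ⟨⟨k0, by omega⟩, by show k0 ≤ i.val; omega, Set.mem_singleton_iff.mp hcr⟩

/-- The backward direction. -/
lemma backward {mult : V → ℕ} (x : E)
    (h : G.EdgeOnCycle x ∨
      ∃ n, ∃ w : G.Walk n, Function.Injective w.vs ∧ (∃ i, w.es i = x) ∧
        ((G.VertexOnCycle (w.vs 0) ∧ G.VertexOnCycle (w.vs (Fin.last n))) ∨
         (G.VertexOnCycle (w.vs 0) ∧ 1 < mult (w.vs (Fin.last n))) ∨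
         (1 < mult (w.vs 0) ∧ 1 < mult (w.vs (Fin.last n))))) :
    ¬ G.ExceptionalEdge mult x := by
  rintro ⟨T, hxT⟩
  rcases h with ⟨n, w, hc, i, hi⟩ | ⟨n, w, hinj, ⟨i, hi⟩, hend⟩
  · -- cycle case
    have hx' : w.es i ∈ T.ES := by rw [hi]; exact hxT
    have hva : w.vs i.castSucc ∈ T.VS := T.tree.1.1 _ hx' _ (mem_ends_left w i)
    have hvb : w.vs i.succ ∈ T.VS := T.tree.1.1 _ hx' _ (mem_ends_right w i)
    have hca : w.vs i.castSucc = T.v := T.cycles _ hva ⟨n, w, hc, _, rfl⟩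
    have hcb : w.vs i.succ = T.v := T.cycles _ hvb ⟨n, w, hc, _, rfl⟩
    have hloop : G.ends x = s(T.v, T.v) := by rw [← hi, w.ok i, hca, hcb]
    apply T.tree.2
    refine ⟨1, edgeWalk x T.v T.v hloop,
      ⟨one_pos, fun p q _ => Subsingleton.elim p q,
        by rw [edgeWalk_vs_last, edgeWalk_vs_zero],
        fun p q _ => Subsingleton.elim p q⟩, ?_, ?_⟩
    · intro p
      rw [edgeWalk_vs]
      split <;> exact T.v_mem
    · intro p
      rw [edgeWalk_es]
      exact hxT
  · -- path case
    have hx' : w.es i ∈ T.ES := by rw [hi]; exact hxT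
    have hh0 : G.VertexOnCycle (w.vs 0) ∨ 1 < mult (w.vs 0) := by
      rcases hend with ⟨h1, _⟩ | ⟨h1, _⟩ | ⟨h1, _⟩
      exacts [Or.inl h1, Or.inl h1, Or.inr h1]
    have hhN : G.VertexOnCycle (w.vs (Fin.last n)) ∨ 1 < mult (w.vs (Fin.last n)) := by
      rcases hend with ⟨_, h1⟩ | ⟨_, h1⟩ | ⟨_, h1⟩
      exacts [Or.inl h1, Or.inr h1, Or.inr h1]
    obtain ⟨k, hk, hkv⟩ := cross T w i hx' hh0
    have hxrev : (revW w).es i.rev ∈ T.ES := by rw [revW_es, Fin.rev_rev]; exact hx'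
    have hh0' : G.VertexOnCycle ((revW w).vs 0) ∨ 1 < mult ((revW w).vs 0) := by
      rw [revW_vs_zero]; exact hhN
    obtain ⟨k', hk', hkv'⟩ := cross T (revW w) i.rev hxrev hh0'
    rw [revW_vs] at hkv'
    have hval := congrArg Fin.val (hinj (hkv.trans hkv'.symm))
    have h1 : (i.rev).val = n - (i.val + 1) := by rw [Fin.val_rev]
    have h2 : (k'.rev).val = n + 1 - (k'.val + 1) := by rw [Fin.val_rev]
    have h3 : i.val < n := i.isLt
    have h4 : k'.val < n + 1 := k'.isLt
    rw [h1] at hk'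
    rw [h2] at hval
    omega

/-- From two heavy vertices on opposite sides of the bridge x, build a simple walk
through x. -/
lemma path_of_heavy {x : E} {a b u u' : V} (hab : G.ends x = s(a, b))
    (hu : Reach (G := G) Set.univ {e | e ≠ x} a u)
    (hu' : Reach (G := G) Set.univ {e | e ≠ x} b u')
    (hdisj : ∀ p, ¬ (Reach (G := G) Set.univ {e | e ≠ x} a p ∧
      Reach (G := G) Set.univ {e | e ≠ x} b p)) :
    ∃ N, ∃ W : G.Walk N, Function.Injective W.vs ∧ (∃ j, W.es j = x) ∧
      W.vs 0 = u ∧ W.vs (Fin.last N) = u' := by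
  obtain ⟨n1, v1, hsub1, hv10, hv11⟩ := hu
  obtain ⟨n2, v2, hsub2, hv20, hv21⟩ := hu'
  obtain ⟨m1, w1, hinj1, hw10, hw11, hes1, hvs1⟩ := exists_simple (G := G) n1 v1
  obtain ⟨m2, w2, hinj2, hw20, hw21, hes2, hvs2⟩ := exists_simple (G := G) n2 v2
  -- all vertices of w1 are reachable from a; of w2 from b
  have hRA : ∀ j, Reach (G := G) Set.univ {e | e ≠ x} a (w1.vs j) := by
    intro j
    obtain ⟨l, hl⟩ := hvs1 j
    rw [hl, ← hv10]
    exact Reach.of_walk_vs hsub1 l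
  have hRB : ∀ j, Reach (G := G) Set.univ {e | e ≠ x} b (w2.vs j) := by
    intro j
    obtain ⟨l, hl⟩ := hvs2 j
    rw [hl, ← hv20]
    exact Reach.of_walk_vs hsub2 l
  have hx1 : ∀ j, w1.es j ≠ x := by
    intro j
    obtain ⟨l, hl⟩ := hes1 j
    rw [hl]; exact hsub1.2 l
  -- w1 reversed : from u to a
  set w1r := revW w1 with hw1r
  have hinj1r : Function.Injective w1r.vs := by
    intro p q hpq
    have h5 := congrArg Fin.rev (hinj1 hpq)
    rwa [Fin.rev_rev, Fin.rev_rev] at h5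
  set ex := edgeWalk x a b hab with hex
  have hj1 : w1r.vs (Fin.last m1) = ex.vs 0 := by
    rw [hw1r, revW_vs_last, hw10, hv10, hex, edgeWalk_vs_zero]
  set W1 := appendW w1r ex hj1 with hW1
  have hj2 : W1.vs (Fin.last (m1 + 1)) = w2.vs 0 := by
    rw [hW1, appendW_vs_last, hex, edgeWalk_vs_last, hw20, hv20]
  set W := appendW W1 w2 hj2 with hW
  -- description of the vertices of W
  have hWlow : ∀ (k : Fin (m1 + 1 + m2 + 1)) (hk : k.val ≤ m1),
      W.vs k = w1r.vs ⟨k.val, by omega⟩ := by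
    intro k hk
    rw [hW, appendW_vs, dif_pos (by omega), hW1, appendW_vs, dif_pos (by simpa using hk)]
  have hWhigh : ∀ (k : Fin (m1 + 1 + m2 + 1)) (hk : m1 + 1 ≤ k.val),
      W.vs k = w2.vs ⟨k.val - (m1 + 1), by omega⟩ := by
    intro k hk
    rcases eq_or_lt_of_le hk with he | hl
    · rw [hW, appendW_vs, dif_pos (by omega), hW1, appendW_vs,
        dif_neg (by show ¬ k.val ≤ m1; omega)]
      have e1 : ex.vs ⟨(⟨k.val, by omega⟩ : Fin (m1 + 1 + 1)).val - m1, by omega⟩ = b := by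
        rw [hex, edgeWalk_vs]
        rw [if_neg (by show ¬ (k.val - m1 = 0); omega)]
      rw [e1, ← hv20, ← hw20]
      apply vs_congr; simp; omega
    · rw [hW, appendW_vs, dif_neg (by omega)]
  -- W is vertex-injective
  have hWinj : Function.Injective W.vs := by
    intro k l hkl
    rcases le_or_gt k.val m1 with hk | hk <;> rcases le_or_gt l.val m1 with hl | hl
    · rw [hWlow k hk, hWlow l hl] at hkl
      have := congrArg Fin.val (hinj1r hkl)
      exact Fin.ext (by simpa using this)
    · exfalso
      rw [hWlow k hk, hWhigh l (by omega)] at hkl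
      refine hdisj (w1r.vs ⟨k.val, by omega⟩) ⟨?_, ?_⟩
      · rw [hw1r, revW_vs]; exact hRA _
      · rw [hkl]; exact hRB _
    · exfalso
      rw [hWhigh k (by omega), hWlow l hl] at hkl
      refine hdisj (w1r.vs ⟨l.val, by omega⟩) ⟨?_, ?_⟩
      · rw [hw1r, revW_vs]; exact hRA _
      · rw [← hkl]; exact hRB _
    · rw [hWhigh k (by omega), hWhigh l (by omega)] at hkl
      have h6 : k.val - (m1 + 1) = l.val - (m1 + 1) := by
        simpa using congrArg Fin.val (hinj2 hkl)
      exact Fin.ext (by omega)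
  refine ⟨m1 + 1 + m2, W, hWinj, ⟨⟨m1, by omega⟩, ?_⟩, ?_, ?_⟩
  · rw [hW, appendW_es, dif_pos (by show m1 < m1 + 1; omega), hW1, appendW_es,
      dif_neg (by show ¬ m1 < m1; omega)]
    rw [hex, edgeWalk_es]
  · rw [hW, appendW_vs_zero, hW1, appendW_vs_zero, hw1r, revW_vs_zero, hw11, hv11]
  · rw [hW, appendW_vs_last, hw21, hv21]


lemma ends_pair {e : E} {p q : V} (hp : p ∈ G.ends e) (hq : q ∈ G.ends e) (hne : p ≠ q) :
    G.ends e = s(p, q) := by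
  obtain ⟨p', q', h⟩ := sym2_exists (G.ends e)
  rw [h] at hp hq ⊢
  rcases Sym2.mem_iff.mp hp with rfl | rfl <;> rcases Sym2.mem_iff.mp hq with rfl | rfl
  · exact absurd rfl hne
  · rfl
  · exact Sym2.eq_swap
  · exact absurd rfl hne

/-- Main construction: if x is not on a cycle and all vertices not reachable from a
avoiding x are light, then x lies in an exceptional subtree. -/
lemma build {mult : V → ℕ} (hmult : ∀ v, 1 ≤ mult v) (hconn : G.Connected)
    (hnt : ¬ G.IsBrauerTree mult) (x : E) (a b : V) (hab : G.ends x = s(a, b))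
    (hnc : ¬ G.EdgeOnCycle x)
    (hB : ∀ u, ¬ Reach (G := G) Set.univ {e | e ≠ x} a u →
      ¬ (G.VertexOnCycle u ∨ 1 < mult u)) :
    G.ExceptionalEdge mult x := by
  classical
  set A : Set V := {u | Reach (G := G) Set.univ {e | e ≠ x} a u} with hAdef
  set B : Set V := Aᶜ with hBdef
  set VS : Set V := B ∪ {a} with hVSdef
  set ES : Set E := {e | ∃ p ∈ G.ends e, p ∈ B} with hESdef
  have haA : a ∈ A := Reach.refl (Set.mem_univ a)
  have hbB : b ∈ B := by
    intro hbA
    exact hnc (cycle_of_reach hab (Reach.symm hbA))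
  have hnotB : ∀ p, p ∉ B → p ∈ A := fun p hp => not_not.mp hp
  have hnotA : ∀ p, p ∉ A → p ∈ B := fun p hp => hp
  have hABdisj : ∀ p, p ∈ A → p ∈ B → False := fun p h1 h2 => h2 h1
  -- all vertices of an x-avoiding walk starting in A are in A
  have hAwalk : ∀ {n : ℕ} (w : G.Walk n), w.inSub Set.univ {e | e ≠ x} → w.vs 0 ∈ A →
      ∀ i, w.vs i ∈ A := by
    intro n w hsub h0
    refine walk_vs_prop w A h0 ?_
    intro i hprev
    exact Reach.trans hprev
      (Reach.edge (w.ok i) (hsub.2 i) (Set.mem_univ _) (Set.mem_univ _))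
  -- all vertices of an x-avoiding walk starting at b are reachable from b
  have hBwalk : ∀ {n : ℕ} (w : G.Walk n), w.inSub Set.univ {e | e ≠ x} → w.vs 0 = b →
      ∀ i, Reach (G := G) Set.univ {e | e ≠ x} b (w.vs i) := by
    intro n w hsub h0
    refine walk_vs_prop w {u | Reach (G := G) Set.univ {e | e ≠ x} b u}
      (by rw [h0]; exact Reach.refl (Set.mem_univ b)) ?_
    intro i hprev
    exact Reach.trans hprev
      (Reach.edge (w.ok i) (hsub.2 i) (Set.mem_univ _) (Set.mem_univ _))
  have hBbB : ∀ u, Reach (G := G) Set.univ {e | e ≠ x} b u → u ∈ B := by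
    intro u h hu
    exact reach_not_both hnc hab u ⟨hu, h⟩
  have hBinBb : ∀ u, u ∈ B → Reach (G := G) Set.univ {e | e ≠ x} b u := by
    intro u hu
    rcases reach_total hconn hab u with h | h
    · exact absurd h hu
    · exact h
  have hxES : x ∈ ES := ⟨b, by rw [hab]; exact Sym2.mem_iff.mpr (Or.inr rfl), hbB⟩
  have haVS : a ∈ VS := Or.inr rfl
  -- closure of the tree subgraph
  have htreeclosed : ∀ e ∈ ES, ∀ p ∈ G.ends e, p ∈ VS := by
    intro e he p hp
    by_cases hpB : p ∈ B
    · exact Or.inl hpB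
    have hpA : p ∈ A := hnotB p hpB
    obtain ⟨q, hq, hqB⟩ := he
    by_cases hex : e = x
    · subst hex
      rw [hab] at hp
      rcases Sym2.mem_iff.mp hp with rfl | rfl
      · exact Or.inr rfl
      · exact absurd hpA hbB
    · exfalso
      have hpq : p ≠ q := by
        rintro rfl
        exact hqB hpA
      have hends : G.ends e = s(p, q) := ends_pair hp hq hpq
      exact hqB (Reach.trans hpA (Reach.edge hends hex (Set.mem_univ _) (Set.mem_univ _)))
  -- connectivity of the tree subgraph
  have hVSreach : ∀ u ∈ VS, Reach (G := G) VS ES b u := by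
    intro u hu
    rcases hu with huB | hua
    · obtain ⟨n, w, hsub, h0, h1⟩ := hBinBb u huB
      have hvB : ∀ i, w.vs i ∈ B := fun i => hBbB _ (hBwalk w hsub h0 i)
      refine ⟨n, w, ⟨fun i => Or.inl (hvB i), fun i => ⟨w.vs i.castSucc,
        mem_ends_left w i, hvB i.castSucc⟩⟩, h0, h1⟩
    · have hua' : u = a := hua
      subst hua'
      exact Reach.edge (by rw [hab]; exact Sym2.eq_swap) hxES (Or.inl hbB) (Or.inr rfl)
  -- no cycle among the heavy-free side
  have hcycA : ∀ {n : ℕ} (w : G.Walk n), G.IsCycleWalk w → ∀ i, w.vs i ∈ A := by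
    intro n w hc i
    by_contra hmem
    exact hB _ hmem (Or.inl ⟨n, w, hc, i, rfl⟩)
  have htreenocycle : ¬ ∃ n, ∃ w : G.Walk n, G.IsCycleWalk w ∧ w.inSub VS ES := by
    rintro ⟨n, w, hc, hsub⟩
    obtain ⟨q, hq, hqB⟩ := hsub.2 ⟨0, hc.1⟩
    rcases ends_subset w ⟨0, hc.1⟩ q hq with rfl | rfl
    · exact hABdisj _ (hcycA w hc _) hqB
    · exact hABdisj _ (hcycA w hc _) hqB
  -- complement subgraph
  have hAsub : ∀ p ∈ A, p ∈ VSᶜ ∪ ({a} : Set V) := by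
    intro p hpA
    by_cases hpa : p = a
    · exact Or.inr hpa
    · left
      rintro (hpB | hpa')
      · exact hABdisj p hpA hpB
      · exact hpa hpa'
  have hsubA : ∀ p, p ∈ VSᶜ ∪ ({a} : Set V) → p ∈ A := by
    rintro p (hp | hp)
    · exact hnotB p (fun hB' => hp (Or.inl hB'))
    · have : p = a := hp
      rw [this]; exact haA
  have hcompreach : ∀ u ∈ A, Reach (G := G) (VSᶜ ∪ {a}) ESᶜ a u := by
    intro u huA
    obtain ⟨n, w, hsub, h0, h1⟩ := huA
    have hvA : ∀ i, w.vs i ∈ A := hAwalk w hsub (by rw [h0]; exact haA)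
    refine ⟨n, w, ⟨fun i => hAsub _ (hvA i), fun i => ?_⟩, h0, h1⟩
    rintro ⟨q, hq, hqB⟩
    rcases ends_subset w i q hq with rfl | rfl
    · exact hABdisj _ (hvA _) hqB
    · exact hABdisj _ (hvA _) hqB
  have hcompconn : G.SubConnected (VSᶜ ∪ {a}) ESᶜ := by
    constructor
    · intro e he p hp
      have hpA : p ∈ A := hnotB p (fun hpB => he ⟨p, hp, hpB⟩)
      exact hAsub p hpA
    · intro u hu u' hu'
      exact Reach.trans (Reach.symm (hcompreach u (hsubA u hu)))
        (hcompreach u' (hsubA u' hu'))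
  -- uniqueness of the connecting vertex
  have hvunique : ∀ u ∈ VS, G.SubConnected (VSᶜ ∪ {u}) ESᶜ → u = a := by
    by_cases hall : ∀ e, e ∈ ES
    · exfalso
      apply hnt
      constructor
      · refine ⟨hconn, ?_⟩
        rintro ⟨n, w, hc, _⟩
        obtain ⟨q, hq, hqB⟩ := hall (w.es ⟨0, hc.1⟩)
        rcases ends_subset w ⟨0, hc.1⟩ q hq with rfl | rfl
        · exact hABdisj _ (hcycA w hc _) hqB
        · exact hABdisj _ (hcycA w hc _) hqB
      · have hAa : ∀ u ∈ A, u = a := by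
          intro u hu
          obtain ⟨n, w, hsub, h0, h1⟩ := hu
          rcases Nat.eq_zero_or_pos n with hn | hn
          · subst hn
            rw [← h1, show (Fin.last 0) = 0 from rfl, h0]
          · exfalso
            have hvA : ∀ i, w.vs i ∈ A := hAwalk w hsub (by rw [h0]; exact haA)
            obtain ⟨q, hq, hqB⟩ := hall (w.es ⟨0, hn⟩)
            rcases ends_subset w ⟨0, hn⟩ q hq with rfl | rfl
            · exact hABdisj _ (hvA _) hqB
            · exact hABdisj _ (hvA _) hqB
        intro u hu u' hu'
        have huA : u ∈ A := by
          by_contra h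
          exact hB u h (Or.inr hu)
        have huA' : u' ∈ A := by
          by_contra h
          exact hB u' h (Or.inr hu')
        rw [hAa u huA, hAa u' huA']
    · push_neg at hall
      obtain ⟨e0, he0⟩ := hall
      intro u hu hSC
      by_contra hua
      have huB : u ∈ B := by
        rcases hu with h | h
        · exact h
        · exact absurd h hua
      have hend : ∀ p ∈ G.ends e0, p ∈ A := by
        intro p hp
        exact hnotB p (fun hpB => he0 ⟨p, hp, hpB⟩)
      obtain ⟨p, q, hpq⟩ := sym2_exists (G.ends e0)
      have hpA : p ∈ A := hend p (by rw [hpq]; exact Sym2.mem_iff.mpr (Or.inl rfl))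
      have hpVS : p ∈ VSᶜ ∪ {u} := hSC.1 e0 he0 p (by rw [hpq]; exact Sym2.mem_iff.mpr (Or.inl rfl))
      obtain ⟨n, w, hsub, h0, h1⟩ := hSC.2 p hpVS u (Or.inr rfl)
      have hvert : ∀ i, w.vs i ∈ A := by
        refine walk_vs_prop w A (by rw [h0]; exact hpA) ?_
        intro i _
        have hi := hsub.2 i
        exact hnotB _ (fun hsB => hi ⟨w.vs i.succ, mem_ends_right w i, hsB⟩)
      exact hABdisj u (h1 ▸ hvert (Fin.last n)) huB
  -- the cycles condition
  have hcycles : ∀ u ∈ VS, G.VertexOnCycle u → u = a := by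
    intro u hu hcyc
    have huA : u ∈ A := by
      by_contra h
      exact hB u h (Or.inl hcyc)
    rcases hu with h | h
    · exact absurd huA h
    · exact h
  -- the multiplicity condition
  have hmultone : ∀ u ∈ VS, u ≠ a → mult u = 1 := by
    intro u hu hne
    have huB : u ∈ B := by
      rcases hu with h | h
      · exact h
      · exact absurd h hne
    have h1 := hmult u
    by_contra hm
    exact hB u huB (Or.inr (by omega))
  exact ⟨⟨VS, ES, a, haVS,
    ⟨⟨htreeclosed, fun u hu u' hu' =>
      Reach.trans (Reach.symm (hVSreach u hu)) (hVSreach u' hu')⟩, htreenocycle⟩,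
    hcompconn, hvunique, hcycles, hmultone⟩, hxES⟩

end Aux
end Multigraph

open Multigraph

/-- In a finite connected Brauer graph `G` (not a Brauer tree), an
edge `x` is non-exceptional iff `x` belongs to a cycle of `G`, or lies on a simple
path between two vertices each lying on a cycle, or on a simple path between a
vertex on a cycle and a vertex of multiplicity greater than `1`, or on a simple
path between two vertices of multiplicity greater than `1`. -/
theorem nonexceptional_edge_characterisation
    (V E : Type) [Fintype V] [Fintype E] (G : Multigraph V E) (mult : V → ℕ)
    (hmult : ∀ v, 1 ≤ mult v) (hconn : G.Connected)
    (hnt : ¬ G.IsBrauerTree mult) (x : E) :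
    ¬ G.ExceptionalEdge mult x ↔
      (G.EdgeOnCycle x ∨
        ∃ n, ∃ w : G.Walk n, Function.Injective w.vs ∧ (∃ i, w.es i = x) ∧
          ((G.VertexOnCycle (w.vs 0) ∧ G.VertexOnCycle (w.vs (Fin.last n))) ∨
           (G.VertexOnCycle (w.vs 0) ∧ 1 < mult (w.vs (Fin.last n))) ∨
           (1 < mult (w.vs 0) ∧ 1 < mult (w.vs (Fin.last n))))) := by
  constructor
  · -- forward: contrapositive
    intro hne
    by_contra hcon
    have hnc : ¬ G.EdgeOnCycle x := fun h => hcon (Or.inl h)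
    have hnp : ¬ ∃ n, ∃ w : G.Walk n, Function.Injective w.vs ∧ (∃ i, w.es i = x) ∧
        ((G.VertexOnCycle (w.vs 0) ∧ G.VertexOnCycle (w.vs (Fin.last n))) ∨
         (G.VertexOnCycle (w.vs 0) ∧ 1 < mult (w.vs (Fin.last n))) ∨
         (1 < mult (w.vs 0) ∧ 1 < mult (w.vs (Fin.last n)))) := fun h => hcon (Or.inr h)
    apply hne
    obtain ⟨a, b, hab⟩ := Multigraph.Aux.sym2_exists (G.ends x)
    by_cases hHB : ∃ u, Multigraph.Aux.Reach (G := G) Set.univ {e | e ≠ x} b u ∧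
        (G.VertexOnCycle u ∨ 1 < mult u)
    · by_cases hHA : ∃ u, Multigraph.Aux.Reach (G := G) Set.univ {e | e ≠ x} a u ∧
          (G.VertexOnCycle u ∨ 1 < mult u)
      · exfalso
        obtain ⟨u, hu, hhu⟩ := hHA
        obtain ⟨u', hu', hhu'⟩ := hHB
        obtain ⟨N, W, hWinj, ⟨j, hj⟩, hW0, hWl⟩ :=
          Multigraph.Aux.path_of_heavy hab hu hu'
            (Multigraph.Aux.reach_not_both hnc hab)
        apply hnp
        have hrevinj : Function.Injective (Multigraph.Aux.revW W).vs := by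
          intro p q hpq
          have h5 := congrArg Fin.rev (hWinj hpq)
          rwa [Fin.rev_rev, Fin.rev_rev] at h5
        rcases hhu with hcu | hmu <;> rcases hhu' with hcu' | hmu'
        · exact ⟨N, W, hWinj, ⟨j, hj⟩,
            Or.inl ⟨by rw [hW0]; exact hcu, by rw [hWl]; exact hcu'⟩⟩
        · exact ⟨N, W, hWinj, ⟨j, hj⟩,
            Or.inr (Or.inl ⟨by rw [hW0]; exact hcu, by rw [hWl]; exact hmu'⟩)⟩
        · refine ⟨N, Multigraph.Aux.revW W, hrevinj,
            ⟨j.rev, by rw [Multigraph.Aux.revW_es, Fin.rev_rev]; exact hj⟩,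
            Or.inr (Or.inl ⟨?_, ?_⟩)⟩
          · rw [Multigraph.Aux.revW_vs_zero, hWl]; exact hcu'
          · rw [Multigraph.Aux.revW_vs_last, hW0]; exact hmu
        · exact ⟨N, W, hWinj, ⟨j, hj⟩,
            Or.inr (Or.inr ⟨by rw [hW0]; exact hmu, by rw [hWl]; exact hmu'⟩)⟩
      · apply Multigraph.Aux.build hmult hconn hnt x b a
          (by rw [hab]; exact Sym2.eq_swap) hnc
        intro u hnr hh
        rcases Multigraph.Aux.reach_total hconn hab u with h | h
        · exact hHA ⟨u, h, hh⟩
        · exact hnr h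
    · apply Multigraph.Aux.build hmult hconn hnt x a b hab hnc
      intro u hnr hh
      rcases Multigraph.Aux.reach_total hconn hab u with h | h
      · exact hnr h
      · exact hHB ⟨u, h, hh⟩
  · exact Multigraph.Aux.backward x
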